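/- Let p be an odd prime, m ≥ 2, q = p^m, 1 ≤ s < m, and suppose v_2(s) ≤ v_2(m). Let x and y be two distinct (q+1)-th roots of unity in GF(q^2), both different from 1. Then the determinant of the 3×3 matrix with rows (1,1,1), (1,x,y), (1,x^{p^s},y^{p^s}) is nonzero. -/

import Mathlib

lemma aux_padic_mono (a b : ℕ) (ha : a ≠ 0) (hb : b ≠ 0) (h : a ∣ b) :
    padicValNat 2 a ≤ padicValNat 2 b := by
  have := (Nat.factorization_le_iff_dvd ha hb).mpr h 2
  simpa [Nat.factorization_def _ Nat.prime_two] using this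

lemma aux_dvd_of_dvd_two_mul (d m : ℕ) (hd : d ≠ 0) (hm : m ≠ 0) (h : d ∣ 2 * m)
    (hv : padicValNat 2 d ≤ padicValNat 2 m) : d ∣ m := by
  rw [← Nat.factorization_le_iff_dvd hd hm]
  intro r
  rcases eq_or_ne r 2 with rfl | hr2
  · simpa [Nat.factorization_def _ Nat.prime_two] using hv
  · have h1 := (Nat.factorization_le_iff_dvd hd (by positivity)).mpr h r
    have h2 : (2 * m).factorization r = m.factorization r := by
      rw [Nat.factorization_mul (by norm_num) hm, Finsupp.add_apply,
        Nat.Prime.factorization Nat.prime_two, Finsupp.single_apply, if_neg (Ne.symm hr2), zero_add]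
    omega

lemma aux_key (p m s e : ℕ) (hp : p.Prime) (hm : m ≠ 0) (hs : s ≠ 0)
    (hv : padicValNat 2 s ≤ padicValNat 2 m)
    (h1 : e ∣ p ^ s - 1) (h2 : e ∣ p ^ m + 1) : e ∣ 2 := by
  have hp1 : 1 ≤ p ^ s := Nat.one_le_pow _ _ hp.pos
  have he : e ≠ 0 := by
    rintro rfl
    have h0 : p ^ s - 1 = 0 := Nat.eq_zero_of_zero_dvd h1
    have : 2 ≤ p ^ s := by
      calc 2 ≤ p := hp.two_le
      _ ≤ p ^ s := Nat.le_self_pow hs p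
    omega
  haveI : NeZero e := ⟨he⟩
  have hc0 : ((p ^ s - 1 : ℕ) : ZMod e) = 0 := (ZMod.natCast_eq_zero_iff _ _).mpr h1
  have hps : ((p : ZMod e)) ^ s = 1 := by
    have h' : ((p ^ s : ℕ) : ZMod e) = 1 := by
      rw [← Nat.sub_add_cancel hp1, Nat.cast_add, hc0, Nat.cast_one, zero_add]
    push_cast at h'
    exact h'
  have hpm : ((p : ZMod e)) ^ m = -1 := by
    have : ((p ^ m + 1 : ℕ) : ZMod e) = 0 := (ZMod.natCast_eq_zero_iff _ _).mpr h2
    push_cast at this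
    linear_combination this
  set f := orderOf ((p : ZMod e)) with hf
  have hfs : f ∣ s := orderOf_dvd_of_pow_eq_one hps
  have hf2m : f ∣ 2 * m := by
    apply orderOf_dvd_of_pow_eq_one
    rw [pow_mul', hpm]
    ring
  have hfne : f ≠ 0 := by
    intro h0
    have : IsOfFinOrder ((p : ZMod e)) :=
      isOfFinOrder_iff_pow_eq_one.mpr ⟨s, Nat.pos_of_ne_zero hs, hps⟩
    exact absurd (orderOf_pos_iff.mpr this) (by omega)
  have hvf : padicValNat 2 f ≤ padicValNat 2 m :=
    le_trans (aux_padic_mono f s hfne hs hfs) hv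
  have hfm : f ∣ m := aux_dvd_of_dvd_two_mul f m hfne hm hf2m hvf
  have hone : ((p : ZMod e)) ^ m = 1 := by
    obtain ⟨k, rfl⟩ := hfm
    rw [pow_mul, pow_orderOf_eq_one, one_pow]
  have h2e : ((2 : ℕ) : ZMod e) = 0 := by
    push_cast
    rw [hone] at hpm
    linear_combination hpm
  exact (ZMod.natCast_eq_zero_iff _ _).mp h2e

lemma aux_copr (p m s : ℕ) (hp : p.Prime) (hm : m ≠ 0) : Nat.Coprime (p ^ s) (p ^ m + 1) := by
  apply Nat.Coprime.pow_left
  rw [hp.coprime_iff_not_dvd]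
  intro hdvd
  have : p ∣ 1 := (Nat.dvd_add_right (dvd_pow_self p hm)).mp hdvd
  exact Nat.Prime.one_lt hp |>.ne' (Nat.dvd_one.mp this)

lemma aux_eq_one {F : Type*} [Monoid F] (p m s : ℕ) (hp : p.Prime) (hm : m ≠ 0) (t : F)
    (h1 : t ^ (p ^ s) = 1) (h2 : t ^ (p ^ m + 1) = 1) : t = 1 := by
  have d1 : orderOf t ∣ p ^ s := orderOf_dvd_of_pow_eq_one h1
  have d2 : orderOf t ∣ p ^ m + 1 := orderOf_dvd_of_pow_eq_one h2
  have h1 : orderOf t = 1 := Nat.eq_one_of_dvd_coprimes (aux_copr p m s hp hm) d1 d2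
  exact orderOf_eq_one_iff.mp h1

lemma aux_t {F : Type*} [Field F] (p m s : ℕ) (hp : p.Prime) (hm : m ≠ 0) (hs : s ≠ 0)
    (hv : padicValNat 2 s ≤ padicValNat 2 m) (t : F) (ht0 : t ≠ 0)
    (h1 : t ^ (p ^ s) = t) (h2 : t ^ (p ^ m + 1) = 1) : t ^ 2 = 1 := by
  have hp1 : 1 ≤ p ^ s := Nat.one_le_pow _ _ hp.pos
  have h1' : t ^ (p ^ s - 1) = 1 := by
    apply mul_right_cancel₀ ht0
    rw [← pow_succ, Nat.sub_add_cancel hp1, h1, one_mul]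
  have d1 : orderOf t ∣ p ^ s - 1 := orderOf_dvd_of_pow_eq_one h1'
  have d2 : orderOf t ∣ p ^ m + 1 := orderOf_dvd_of_pow_eq_one h2
  obtain ⟨k, hk⟩ := aux_key p m s (orderOf t) hp hm hs hv d1 d2
  rw [hk, pow_mul, pow_orderOf_eq_one, one_pow]

theorem stmt6 (p m s q : ℕ) (hp : p.Prime) (hpodd : Odd p) (hm : 2 ≤ m)
    (hq : q = p ^ m) (hs1 : 1 ≤ s) (hs2 : s < m)
    (hv2 : padicValNat 2 s ≤ padicValNat 2 m)
    (F : Type*) [Field F] [Fintype F] (hF : Fintype.card F = q ^ 2)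
    (x y : F) (hx : x ^ (q + 1) = 1) (hy : y ^ (q + 1) = 1)
    (hxy : x ≠ y) (hx1 : x ≠ 1) (hy1 : y ≠ 1) :
    Matrix.det !![1, 1, 1; 1, x, y; 1, x ^ (p ^ s), y ^ (p ^ s)] ≠ 0 := by
  haveI : Fact p.Prime := ⟨hp⟩
  have hm0 : m ≠ 0 := by omega
  have hs0 : s ≠ 0 := by omega
  haveI hcharF : CharP F p := by
    have hring : ringChar F = p := by
      obtain ⟨n, hn, hcard⟩ := FiniteField.card F (ringChar F)
      rw [hF, hq, ← pow_mul] at hcard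
      have hd : ringChar F ∣ p ^ (m * 2) := hcard ▸ dvd_pow_self _ n.pos.ne'
      exact (Nat.prime_dvd_prime_iff_eq hn hp).mp (hn.dvd_of_dvd_pow hd)
    exact hring ▸ ringChar.charP F
  have h2F : (2 : F) ≠ 0 := by
    intro h
    have hdvd : (p : ℕ) ∣ 2 := (CharP.cast_eq_zero_iff F p 2).mp (by exact_mod_cast h)
    have hp2 : p = 2 := (Nat.prime_dvd_prime_iff_eq hp Nat.prime_two).mp hdvd
    rw [hp2, Nat.odd_iff] at hpodd
    simp at hpodd
  set a := p ^ s with ha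
  have hx0 : x ≠ 0 := by rintro rfl; simp at hx
  have hy0 : y ≠ 0 := by rintro rfl; simp at hy
  have hxq : x ^ (p ^ m + 1) = 1 := by rw [← hq]; exact hx
  have hyq : y ^ (p ^ m + 1) = 1 := by rw [← hq]; exact hy
  have hxa1 : x ^ a ≠ 1 := fun h => hx1 (aux_eq_one p m s hp hm0 x h hxq)
  have hya1 : y ^ a ≠ 1 := fun h => hy1 (aux_eq_one p m s hp hm0 y h hyq)
  intro hdet
  have E : (x - 1) * (y ^ a - 1) = (y - 1) * (x ^ a - 1) := by
    rw [Matrix.det_fin_three] at hdet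
    simp [Matrix.vecHead, Matrix.vecTail] at hdet
    linear_combination hdet
  -- roots of unity: z^q = z⁻¹
  have hA : x ^ q = x⁻¹ := eq_inv_of_mul_eq_one_left (by rw [← pow_succ]; exact hx)
  have hB : y ^ q = y⁻¹ := eq_inv_of_mul_eq_one_left (by rw [← pow_succ]; exact hy)
  have hXu : (x ^ a) ^ (q + 1) = 1 := by rw [← pow_mul, mul_comm, pow_mul, hx, one_pow]
  have hYu : (y ^ a) ^ (q + 1) = 1 := by rw [← pow_mul, mul_comm, pow_mul, hy, one_pow]
  have hC : (x ^ a) ^ q = (x ^ a)⁻¹ := eq_inv_of_mul_eq_one_left (by rw [← pow_succ]; exact hXu)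
  have hD : (y ^ a) ^ q = (y ^ a)⁻¹ := eq_inv_of_mul_eq_one_left (by rw [← pow_succ]; exact hYu)
  have hXne : x ^ a ≠ 0 := pow_ne_zero _ hx0
  have hYne : y ^ a ≠ 0 := pow_ne_zero _ hy0
  -- apply Frobenius^m
  have E2 : (x⁻¹ - 1) * ((y ^ a)⁻¹ - 1) = (y⁻¹ - 1) * ((x ^ a)⁻¹ - 1) := by
    have h := congrArg (· ^ q) E
    rw [hq, mul_pow, mul_pow, sub_pow_char_pow, sub_pow_char_pow, sub_pow_char_pow,
      sub_pow_char_pow, one_pow, ← hq, hA, hB, hC, hD] at h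
    exact h
  field_simp at E2
  -- E2 : (1 - x) * (1 - y^a) * (y * x^a) = (1 - y) * (1 - x^a) * (x * y^a)
  have hzero : (x - 1) * (y ^ a - 1) * (y * x ^ a - x * y ^ a) = 0 := by
    linear_combination E2 - (x * y ^ a) * E
  have hkey : y * x ^ a = x * y ^ a := by
    rcases mul_eq_zero.mp hzero with h | h
    · rcases mul_eq_zero.mp h with h' | h'
      · exact absurd (by linear_combination h' : x = 1) hx1
      · exact absurd (by linear_combination h' : y ^ a = 1) hya1
    · linear_combination h
  -- t = x/y
  set t : F := x * y⁻¹ with htdef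
  have ht0 : t ≠ 0 := mul_ne_zero hx0 (inv_ne_zero hy0)
  have htpow : t ^ a = t := by
    rw [htdef, mul_pow, inv_pow]
    field_simp
    linear_combination hkey
  have htq : t ^ (p ^ m + 1) = 1 := by
    rw [htdef, mul_pow, inv_pow, hxq, hyq, inv_one, mul_one]
  have ht2 : t ^ 2 = 1 := aux_t p m s hp hm0 hs0 hv2 t ht0 htpow htq
  have ht1 : t ≠ 1 := by
    intro h
    exact hxy (by rw [htdef] at h; exact (mul_inv_eq_one₀ hy0).mp h)
  have htneg : t = -1 := by
    have hfac : (t - 1) * (t + 1) = 0 := by linear_combination ht2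
    rcases mul_eq_zero.mp hfac with h | h
    · exact absurd (by linear_combination h : t = 1) ht1
    · linear_combination h
  have hxneg : x = -y := by
    rw [htdef] at htneg
    field_simp at htneg
    linear_combination htneg
  subst hxneg
  have hodda : Odd a := hpodd.pow
  have hna : (-y) ^ a = -(y ^ a) := hodda.neg_pow y
  rw [hna] at E
  have h2y : 2 * (y ^ a - y) = 0 := by linear_combination -E
  have hya : y ^ a = y := by
    rcases mul_eq_zero.mp h2y with h | h
    · exact absurd h h2F
    · linear_combination h
  have hy2 : y ^ 2 = 1 := aux_t p m s hp hm0 hs0 hv2 y hy0 hya hyq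
  have hyneg : y = -1 := by
    have hfac : (y - 1) * (y + 1) = 0 := by linear_combination hy2
    rcases mul_eq_zero.mp hfac with h | h
    · exact absurd (by linear_combination h : y = 1) hy1
    · linear_combination h
  rw [hyneg] at hx1
  norm_num at hx1
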